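/- Let n ∈ ℕ, N = 2^n, and let G be the n-fold Kronecker power over 𝔽₂ of the kernel [[1,0],[1,1]]. For every T ⊆ {0,…,N−1} and every bit position ℓ ∈ {0,…,n−1}, let T⁰_ℓ = {k ∈ T : the ℓ-th binary digit of k is 0}. Then the Hamming weight of the 𝔽₂-sum of the rows indexed by T is bounded below by that of the sum over T⁰_ℓ: i₁(Σ_{t∈T} g_t) ≥ i₁(Σ_{t∈T⁰_ℓ} g_t); in particular i₁(g_T) ≥ max_{ℓ∈[0,n)} i₁(g_{T⁰_ℓ}). -/

import Mathlib

open Finset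

/-- The polar kernel `G₂ = [[1,0],[1,1]]` over `𝔽₂`. -/
def polarKernel : Matrix (Fin 2) (Fin 2) (ZMod 2) := !![1, 0; 1, 1]

/-- The `n`-fold Kronecker power of the polar kernel, an `N × N` matrix over `𝔽₂`
with `N = 2 ^ n`, rows and columns indexed by `0, …, N-1`. -/
def polarG : (n : ℕ) → Matrix (Fin (2 ^ n)) (Fin (2 ^ n)) (ZMod 2)
  | 0 => 1
  | n + 1 =>
    Matrix.reindex (finCongr (by ring)) (finCongr (by ring))
      (Matrix.reindex finProdFinEquiv finProdFinEquiv
        (Matrix.kroneckerMap (· * ·) polarKernel (polarG n)))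

/-- Row `g_t` of the polar matrix, as a vector in `𝔽₂^N`. -/
def row (n : ℕ) (t : Fin (2 ^ n)) : Fin (2 ^ n) → ZMod 2 := fun c => polarG n t c

/-- Hamming weight `i₁(v)`: the number of nonzero coordinates of `v`. -/
def hammingWeight {N : ℕ} (v : Fin N → ZMod 2) : ℕ :=
  (Finset.univ.filter fun c => v c ≠ 0).card

/-- `popcount j`: the number of ones in the binary representation of `j`. -/
def popcount (j : ℕ) : ℕ := (Nat.bits j).count true

/- ### Auxiliary lemmas -/

lemma land_forall (c t : ℕ) : c &&& t = c ↔ ∀ i, c.testBit i = true → t.testBit i = true := by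
  constructor
  · intro h i hi
    have h2 := congrArg (fun x => Nat.testBit x i) h
    simp only [Nat.testBit_land, hi, Bool.true_and] at h2
    exact h2
  · intro h
    apply Nat.eq_of_testBit_eq
    intro i
    rw [Nat.testBit_land]
    cases hc : c.testBit i
    · simp
    · simp [h i hc]

lemma split_land (n t c : ℕ) (ht : t < 2^(n+1)) (hc : c < 2^(n+1)) :
    (c &&& t = c) ↔ (c / 2^n ≤ t / 2^n ∧ (c % 2^n) &&& (t % 2^n) = c % 2^n) := by
  have hc2 : c / 2 ^ n < 2 := Nat.div_lt_of_lt_mul (by rw [← pow_succ]; exact hc)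
  have ht2 : t / 2 ^ n < 2 := Nat.div_lt_of_lt_mul (by rw [← pow_succ]; exact ht)
  have hbc : c.testBit n = decide (c / 2^n = 1) := by
    rw [Nat.testBit_eq_decide_div_mod_eq, Nat.mod_eq_of_lt hc2]
  have hbt : t.testBit n = decide (t / 2^n = 1) := by
    rw [Nat.testBit_eq_decide_div_mod_eq, Nat.mod_eq_of_lt ht2]
  rw [land_forall, land_forall]
  constructor
  · rintro h
    refine ⟨?_, fun i hi => ?_⟩
    · have := h n
      rw [hbc, hbt] at this
      simp only [decide_eq_true_eq] at this
      rcases Nat.le_one_iff_eq_zero_or_eq_one.mp (Nat.lt_succ_iff.mp hc2) with h0 | h1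
      · rw [h0]; exact Nat.zero_le _
      · rw [h1, this h1]
    · rcases lt_or_ge i n with hin | hin
      · rw [Nat.testBit_mod_two_pow] at hi ⊢
        simp only [hin, decide_true, Bool.true_and] at hi ⊢
        exact h i hi
      · exfalso
        rw [Nat.testBit_mod_two_pow] at hi
        simp [Nat.not_lt.mpr hin] at hi
  · rintro ⟨hle, h⟩ i hi
    rcases lt_trichotomy i n with hin | rfl | hin
    · have := h i
      rw [Nat.testBit_mod_two_pow, Nat.testBit_mod_two_pow] at this
      simp only [hin, decide_true, Bool.true_and] at this
      exact this hi
    · rw [hbt]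
      rw [hbc] at hi
      simp only [decide_eq_true_eq] at hi ⊢
      exact Nat.le_antisymm (Nat.lt_succ_iff.mp ht2) (hi ▸ hle)
    · exfalso
      have hlt : c < 2 ^ i := lt_of_lt_of_le hc (Nat.pow_le_pow_right (by norm_num) hin)
      rw [Nat.testBit_lt_two_pow hlt] at hi
      exact Bool.false_ne_true hi

lemma polarKernel_apply (a b : Fin 2) :
    polarKernel a b = if (b : ℕ) ≤ (a : ℕ) then 1 else 0 := by
  fin_cases a <;> fin_cases b <;> simp [polarKernel]

lemma polarG_apply (n : ℕ) (t c : Fin (2 ^ n)) :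
    polarG n t c = if (c : ℕ) &&& (t : ℕ) = (c : ℕ) then 1 else 0 := by
  induction n with
  | zero =>
    have h : t = c := by
      apply Fin.ext
      omega
    subst h
    have h0 : (t : ℕ) = 0 := by omega
    simp [polarG, Matrix.one_apply, h0]
  | succ n ih =>
    simp only [polarG, Matrix.reindex_apply, Matrix.submatrix_apply, Matrix.kroneckerMap_apply,
      finCongr_symm, finCongr_apply, finProdFinEquiv_symm_apply]
    rw [ih, polarKernel_apply]
    have hdc : ((Fin.cast (by ring : 2 ^ (n+1) = 2 * 2 ^ n) c).divNat : ℕ) = (c : ℕ) / 2 ^ n := by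
      simp [Fin.divNat]
    have hdt : ((Fin.cast (by ring : 2 ^ (n+1) = 2 * 2 ^ n) t).divNat : ℕ) = (t : ℕ) / 2 ^ n := by
      simp [Fin.divNat]
    have hmc : ((Fin.cast (by ring : 2 ^ (n+1) = 2 * 2 ^ n) c).modNat : ℕ) = (c : ℕ) % 2 ^ n := by
      simp [Fin.modNat]
    have hmt : ((Fin.cast (by ring : 2 ^ (n+1) = 2 * 2 ^ n) t).modNat : ℕ) = (t : ℕ) % 2 ^ n := by
      simp [Fin.modNat]
    rw [hdc, hdt, hmc, hmt]
    have key := split_land n (t : ℕ) (c : ℕ) t.isLt c.isLt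
    simp only [key]
    split_ifs with h1 h2 h3 <;> simp_all

lemma row_apply (n : ℕ) (t c : Fin (2 ^ n)) :
    row n t c = if (c : ℕ) &&& (t : ℕ) = (c : ℕ) then 1 else 0 := polarG_apply n t c

/-- Flip bit `ℓ` of a `Fin (2^n)` index. -/
def flipBit (n ℓ : ℕ) (hℓ : ℓ < n) (c : Fin (2 ^ n)) : Fin (2 ^ n) :=
  ⟨(c : ℕ) ^^^ 2 ^ ℓ,
    Nat.xor_lt_two_pow c.isLt (Nat.pow_lt_pow_right one_lt_two hℓ)⟩

lemma flipBit_coe (n ℓ : ℕ) (hℓ : ℓ < n) (c : Fin (2 ^ n)) :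
    ((flipBit n ℓ hℓ c : Fin (2^n)) : ℕ) = (c : ℕ) ^^^ 2 ^ ℓ := rfl

lemma testBit_flipBit (n ℓ i : ℕ) (hℓ : ℓ < n) (c : Fin (2 ^ n)) :
    ((flipBit n ℓ hℓ c : Fin (2^n)) : ℕ).testBit i =
      if i = ℓ then !((c : ℕ).testBit ℓ) else (c : ℕ).testBit i := by
  rw [flipBit_coe, Nat.testBit_xor]
  by_cases h : i = ℓ
  · subst h
    simp [Nat.testBit_two_pow_self]
  · simp [h, Nat.testBit_two_pow_of_ne (fun hh => h hh.symm)]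

lemma row_eq_zero (n ℓ : ℕ) (t c : Fin (2 ^ n))
    (ht : (t : ℕ).testBit ℓ = false) (hc : (c : ℕ).testBit ℓ = true) :
    row n t c = 0 := by
  rw [row_apply, if_neg]
  intro h
  have := (land_forall _ _).mp h ℓ hc
  rw [ht] at this
  exact Bool.false_ne_true this

lemma row_flip_eq (n ℓ : ℕ) (hℓ : ℓ < n) (t c : Fin (2 ^ n))
    (ht : (t : ℕ).testBit ℓ = true) (hc : (c : ℕ).testBit ℓ = false) :
    row n t c = row n t (flipBit n ℓ hℓ c) := by
  rw [row_apply, row_apply]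
  have hiff : ((c : ℕ) &&& (t : ℕ) = (c : ℕ)) ↔
      (((flipBit n ℓ hℓ c : Fin (2^n)) : ℕ) &&& (t : ℕ) = ((flipBit n ℓ hℓ c : Fin (2^n)) : ℕ)) := by
    rw [land_forall, land_forall]
    constructor
    · intro h i hi
      rw [testBit_flipBit] at hi
      by_cases hiℓ : i = ℓ
      · subst hiℓ; exact ht
      · rw [if_neg hiℓ] at hi
        exact h i hi
    · intro h i hi
      by_cases hiℓ : i = ℓ
      · subst hiℓ
        rw [hc] at hi
        exact absurd hi (Bool.false_ne_true)
      · apply h i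
        rw [testBit_flipBit, if_neg hiℓ]
        exact hi
  simp only [hiff]

/-- The key identity: for a coordinate `c` with `ℓ`-th bit `0`, the restricted sum at `c`
equals the full sum at `c` plus the full sum at `c` with bit `ℓ` flipped. -/
lemma sum_split (n : ℕ) (T : Finset (Fin (2 ^ n))) (ℓ : ℕ) (hℓ : ℓ < n)
    (c : Fin (2 ^ n)) (hc : (c : ℕ).testBit ℓ = false) :
    (∑ t ∈ T.filter (fun k : Fin (2 ^ n) => (k : ℕ).testBit ℓ = false), row n t) c =
      (∑ t ∈ T, row n t) c + (∑ t ∈ T, row n t) (flipBit n ℓ hℓ c) := by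
  simp only [Finset.sum_apply]
  rw [← Finset.sum_add_distrib, Finset.sum_filter]
  apply Finset.sum_congr rfl
  intro t _
  by_cases h : (t : ℕ).testBit ℓ = false
  · rw [if_pos h]
    have h0 : row n t (flipBit n ℓ hℓ c) = 0 := by
      apply row_eq_zero n ℓ t _ h
      rw [testBit_flipBit, if_pos rfl, hc]
      rfl
    rw [h0, add_zero]
  · rw [if_neg h]
    have ht : (t : ℕ).testBit ℓ = true := by
      cases hb : (t : ℕ).testBit ℓ
      · exact absurd hb h
      · rfl
    rw [← row_flip_eq n ℓ hℓ t c ht hc]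
    exact (CharTwo.add_self_eq_zero _).symm

lemma sum_zero_at_one (n : ℕ) (T : Finset (Fin (2 ^ n))) (ℓ : ℕ)
    (c : Fin (2 ^ n)) (hc : (c : ℕ).testBit ℓ = true) :
    (∑ t ∈ T.filter (fun k : Fin (2 ^ n) => (k : ℕ).testBit ℓ = false), row n t) c = 0 := by
  rw [Finset.sum_apply]
  apply Finset.sum_eq_zero
  intro t ht
  rw [Finset.mem_filter] at ht
  exact row_eq_zero n ℓ t c ht.2 hc

/-- the Hamming weight of a sum of rows is bounded below by the weight of
the sub-sum over the rows whose `ℓ`-th binary digit is `0`, for every bit position `ℓ < n`. -/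
theorem hamming_weight_lower_bound_zero_bit (n : ℕ) (T : Finset (Fin (2 ^ n)))
    (ℓ : ℕ) (hℓ : ℓ < n) :
    hammingWeight (∑ t ∈ T.filter (fun k : Fin (2 ^ n) => (k : ℕ).testBit ℓ = false), row n t) ≤
      hammingWeight (∑ t ∈ T, row n t) := by
  set w := ∑ t ∈ T.filter (fun k : Fin (2 ^ n) => (k : ℕ).testBit ℓ = false), row n t with hw
  set v := ∑ t ∈ T, row n t with hv
  unfold hammingWeight
  -- every coordinate in the support of w has ℓ-th bit 0
  have hsupp : ∀ c : Fin (2 ^ n), w c ≠ 0 → (c : ℕ).testBit ℓ = false := by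
    intro c hcne
    cases hb : (c : ℕ).testBit ℓ
    · rfl
    · exact absurd (sum_zero_at_one n T ℓ c hb) hcne
  apply Finset.card_le_card_of_injOn
    (fun c => if v c ≠ 0 then c else flipBit n ℓ hℓ c)
  · intro c hc
    rw [Finset.mem_coe, Finset.mem_filter] at hc ⊢
    refine ⟨Finset.mem_univ _, ?_⟩
    beta_reduce
    have hcb := hsupp c hc.2
    by_cases hvc : v c ≠ 0
    · rw [if_pos hvc]; exact hvc
    · rw [if_neg hvc]
      push_neg at hvc
      have := sum_split n T ℓ hℓ c hcb
      rw [← hw, ← hv, hvc, zero_add] at this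
      rw [← this]
      exact hc.2
  · intro a ha b hb hfab
    rw [Finset.coe_filter] at ha hb
    simp only [Set.mem_setOf_eq] at ha hb
    have hab := hsupp a ha.2
    have hbb := hsupp b hb.2
    -- in either branch the image agrees with the input on all bits ≠ ℓ
    have key : ∀ (c : Fin (2 ^ n)) (i : ℕ), i ≠ ℓ →
        (((if v c ≠ 0 then c else flipBit n ℓ hℓ c) : Fin (2^n)) : ℕ).testBit i =
          (c : ℕ).testBit i := by
      intro c i hi
      by_cases hvc : v c ≠ 0
      · rw [if_pos hvc]
      · rw [if_neg hvc, testBit_flipBit, if_neg hi]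
    apply Fin.ext
    apply Nat.eq_of_testBit_eq
    intro i
    by_cases hiℓ : i = ℓ
    · subst hiℓ
      rw [hab, hbb]
    · rw [← key a i hiℓ, ← key b i hiℓ]
      exact congrArg (fun x : Fin (2^n) => (x : ℕ).testBit i) hfab
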